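/- For all nonnegative integers m and n, S(m,n) = C(2m,m)·C(2n,n) + 2·Σ_{k=1}^{∞} (-1)^k · C(2m, m+k) · C(2n, n+k), where S(m,n) = (2m)!(2n)!/(m!·n!·(m+n)!). -/

import Mathlib

open Finset

/-- Binomial coefficient with integer lower index, zero when out of range. -/
def ch (a : ℕ) (b : ℤ) : ℚ := if 0 ≤ b then (a.choose b.toNat : ℚ) else 0

lemma ch_natCast (a b : ℕ) : ch a (b : ℤ) = (a.choose b : ℚ) := by
  simp [ch]

lemma ch_neg {a : ℕ} {b : ℤ} (h : b < 0) : ch a b = 0 := by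
  simp [ch, not_le.2 h]

lemma ch_gt {a : ℕ} {b : ℤ} (h : (a : ℤ) < b) : ch a b = 0 := by
  have hb : 0 ≤ b := le_of_lt (lt_of_le_of_lt (Int.natCast_nonneg a) h)
  have : a < b.toNat := by omega
  simp [ch, hb, Nat.choose_eq_zero_of_lt this]

lemma ch_pascal (a : ℕ) (b : ℤ) : ch (a + 1) b = ch a b + ch a (b - 1) := by
  rcases lt_trichotomy b 0 with h | h | h
  · rw [ch_neg h, ch_neg h, ch_neg (by omega)]; ring
  · subst h; simp [ch]
  · obtain ⟨c, rfl⟩ : ∃ c : ℕ, b = (c : ℤ) + 1 := ⟨(b - 1).toNat, by omega⟩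
    have h1 : ((c : ℤ) + 1).toNat = c + 1 := by omega
    have h2 : ((c : ℤ) + 1 - 1).toNat = c := by omega
    simp only [ch, if_pos (by omega : (0:ℤ) ≤ (c:ℤ)+1), if_pos (by omega : (0:ℤ) ≤ (c:ℤ)+1-1),
      h1, h2]
    rw [Nat.choose_succ_succ]
    push_cast; ring

lemma ch_pascal2 (n : ℕ) (b : ℤ) :
    ch (2*(n+1)) (b+1) = ch (2*n) (b+1) + 2*ch (2*n) b + ch (2*n) (b-1) := by
  rw [show 2*(n+1) = (2*n+1)+1 by ring, ch_pascal, ch_pascal, ch_pascal]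
  simp only [add_sub_cancel_right]
  ring

lemma ch_symm (m : ℕ) (k : ℤ) : ch (2 * m) (m + k) = ch (2 * m) (m - k) := by
  have key : ∀ j : ℕ, ch (2 * m) (m + j) = ch (2 * m) (m - j) := by
    intro j
    rcases le_or_gt j m with hj | hj
    · have h1 : ((m : ℤ) + j).toNat = m + j := by omega
      have h2 : ((m : ℤ) - j).toNat = m - j := by omega
      simp only [ch, if_pos (by omega : (0:ℤ) ≤ (m:ℤ) + j), if_pos (by omega : (0:ℤ) ≤ (m:ℤ) - j),
        h1, h2]
      congr 1
      rw [← Nat.choose_symm (by omega : m + j ≤ 2 * m)]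
      congr 1; omega
    · rw [ch_gt (by push_cast; omega), ch_neg (by omega)]
  rcases le_or_gt 0 k with hk | hk
  · obtain ⟨j, rfl⟩ : ∃ j : ℕ, k = (j : ℤ) := ⟨k.toNat, by omega⟩
    exact key j
  · obtain ⟨j, rfl⟩ : ∃ j : ℕ, k = -(j : ℤ) := ⟨(-k).toNat, by omega⟩
    rw [show (m:ℤ) + -(j:ℤ) = m - j by ring, show (m:ℤ) - -(j:ℤ) = m + j by ring]
    exact (key j).symm

/-- Summand of the full (two-sided) von Szily sum. -/
def g (m n : ℕ) (k : ℤ) : ℚ := (-1:ℚ)^k * ch (2*m) (m+k) * ch (2*n) (n+k)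

/-- Truncated full alternating sum. -/
noncomputable def T (m n L : ℕ) : ℚ := ∑ k ∈ Icc (-(L:ℤ)) L, g m n k

lemma g_zero_hi {m n : ℕ} {k : ℤ} (h : (m:ℤ) < k) : g m n k = 0 := by
  rw [g, ch_gt (by push_cast; omega)]; ring

lemma g_zero_lo {m n : ℕ} {k : ℤ} (h : k < -(m:ℤ)) : g m n k = 0 := by
  rw [g, ch_neg (by omega)]; ring

lemma g_neg (m n : ℕ) (k : ℤ) : g m n (-k) = g m n k := by
  have hpow : (-1:ℚ) ^ (-k) = (-1:ℚ) ^ k := by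
    rw [zpow_neg]
    refine inv_eq_of_mul_eq_one_left ?_
    rw [← zpow_add₀ (by norm_num : (-1:ℚ) ≠ 0)]
    rw [show k + k = 2 * k by ring, zpow_mul]
    norm_num
  rw [g, g, hpow, show (m:ℤ) + -k = m - k by ring, show (n:ℤ) + -k = n - k by ring,
    ← ch_symm m k, ← ch_symm n k]

lemma shift_sum (L : ℤ) (a : ℤ → ℚ) (h0 : a (-L - 1) = 0) (h1 : a L = 0) :
    ∑ k ∈ Icc (-L) L, a (k - 1) = ∑ k ∈ Icc (-L) L, a k := by
  have : ∑ k ∈ Icc (-L - 1) (L - 1), a k = ∑ k ∈ Icc (-L) L, a (k - 1) := by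
    rw [show (-L - 1) = -L + -1 by ring, show (L - 1) = L + -1 by ring,
      ← Finset.map_add_right_Icc (-L) L (-1), Finset.sum_map]
    simp [addRightEmbedding, sub_eq_add_neg]
  rw [← this]
  rw [Finset.sum_subset (Finset.Icc_subset_Icc le_rfl (by omega : L - 1 ≤ L))
      (by intro x hx hx'; simp only [mem_Icc] at hx hx'
          have : x = L := by omega
          subst this; exact h1)]
  rw [Finset.sum_subset (Finset.Icc_subset_Icc (by omega : -L-1 ≤ -L) le_rfl)
      (by intro x hx hx'; simp only [mem_Icc] at hx hx'
          have : x = -L - 1 := by omega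
          subst this; exact h0)]

lemma neg_one_zpow_sub_one (k : ℤ) : (-1 : ℚ) ^ (k - 1) = -(-1 : ℚ) ^ k := by
  rw [zpow_sub_one₀ (by norm_num : (-1:ℚ) ≠ 0)]
  norm_num

lemma telescope (L : ℤ) (a : ℤ → ℚ) (h0 : a (-L - 1) = 0) (h1 : a L = 0) :
    ∑ k ∈ Icc (-L) L, (-1 : ℚ) ^ k * (a k + a (k - 1)) = 0 := by
  have key : ∑ k ∈ Icc (-L) L, (-1:ℚ) ^ k * a (k-1)
      = -∑ k ∈ Icc (-L) L, (-1:ℚ) ^ k * a k := by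
    have := shift_sum L (fun k => (-1:ℚ) ^ k * a k) (by simp [h0]) (by simp [h1])
    calc ∑ k ∈ Icc (-L) L, (-1:ℚ) ^ k * a (k-1)
        = ∑ k ∈ Icc (-L) L, -((-1:ℚ) ^ (k-1) * a (k-1)) := by
          refine Finset.sum_congr rfl fun k _ => ?_
          rw [neg_one_zpow_sub_one]; ring
      _ = -∑ k ∈ Icc (-L) L, (-1:ℚ) ^ (k-1) * a (k-1) := by rw [Finset.sum_neg_distrib]
      _ = -∑ k ∈ Icc (-L) L, (-1:ℚ) ^ k * a k := by rw [this]
  calc ∑ k ∈ Icc (-L) L, (-1 : ℚ) ^ k * (a k + a (k - 1))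
      = (∑ k ∈ Icc (-L) L, (-1:ℚ)^k * a k) + ∑ k ∈ Icc (-L) L, (-1:ℚ)^k * a (k-1) := by
        rw [← Finset.sum_add_distrib]; exact Finset.sum_congr rfl fun k _ => by ring
    _ = 0 := by rw [key]; ring

lemma T_base (n L : ℕ) : T 0 n L = ((2*n).choose n : ℚ) := by
  rw [T, Finset.sum_eq_single 0]
  · simp [g, ch]
  · intro k hk hk0
    rcases lt_or_gt_of_ne hk0 with h | h
    · exact g_zero_lo (by omega)
    · exact g_zero_hi (by omega)
  · intro h
    simp only [Finset.mem_Icc] at h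
    omega

lemma T_rec (m n L : ℕ) (hL : m + 1 ≤ L) :
    T m (n+1) L + T (m+1) n L = 4 * T m n L := by
  set a : ℤ → ℚ := fun k =>
    ch (2*m) (m+k) * ch (2*n) (n+k+1) + ch (2*n) (n+k) * ch (2*m) (m+k+1) with ha
  have key : ∑ k ∈ Icc (-(L:ℤ)) L, (-1:ℚ)^k * (a k + a (k-1)) = 0 := by
    apply telescope
    · show ch (2*m) ((m:ℤ) + (-(L:ℤ)-1)) * _ + _ * ch (2*m) ((m:ℤ) + (-(L:ℤ)-1) + 1) = 0
      rw [ch_neg (show (m:ℤ) + (-(L:ℤ)-1) < 0 by omega),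
        ch_neg (show (m:ℤ) + (-(L:ℤ)-1) + 1 < 0 by omega)]
      ring
    · show ch (2*m) ((m:ℤ) + L) * _ + _ * ch (2*m) ((m:ℤ) + L + 1) = 0
      rw [ch_gt (show ((2*m : ℕ) : ℤ) < (m:ℤ) + L by push_cast; omega),
        ch_gt (show ((2*m : ℕ) : ℤ) < (m:ℤ) + L + 1 by push_cast; omega)]
      ring
  have expand : ∀ k ∈ Icc (-(L:ℤ)) L,
      g m (n+1) k + g (m+1) n k - 4 * g m n k = (-1:ℚ)^k * (a k + a (k-1)) := by
    intro k _
    simp only [g, ha]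
    have e1 : ((n+1 : ℕ) : ℤ) + k = ((n:ℤ) + k) + 1 := by push_cast; ring
    have e2 : ((m+1 : ℕ) : ℤ) + k = ((m:ℤ) + k) + 1 := by push_cast; ring
    rw [e1, e2, ch_pascal2 n ((n:ℤ)+k), ch_pascal2 m ((m:ℤ)+k)]
    have e3 : (n:ℤ) + (k-1) + 1 = (n:ℤ) + k := by ring
    have e4 : (m:ℤ) + (k-1) + 1 = (m:ℤ) + k := by ring
    have e5 : (n:ℤ) + (k-1) = (n:ℤ) + k - 1 := by ring
    have e6 : (m:ℤ) + (k-1) = (m:ℤ) + k - 1 := by ring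
    rw [e3, e4, e5, e6]
    ring
  have : T m (n+1) L + T (m+1) n L - 4 * T m n L = 0 := by
    rw [T, T, T, ← Finset.sum_add_distrib, Finset.mul_sum, ← Finset.sum_sub_distrib, ← key]
    exact Finset.sum_congr rfl expand
  linarith

def Srat (m n : ℕ) : ℚ :=
  ((2*m).factorial * (2*n).factorial : ℚ) / (m.factorial * n.factorial * (m+n).factorial)

lemma Srat_rec (m n : ℕ) : Srat (m+1) n + Srat m (n+1) = 4 * Srat m n := by
  unfold Srat
  have e1 : (2*(m+1)).factorial = (2*m+2) * ((2*m+1) * (2*m).factorial) := by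
    rw [show 2*(m+1) = (2*m+1)+1 by ring, Nat.factorial_succ, Nat.factorial_succ]
  have e2 : (2*(n+1)).factorial = (2*n+2) * ((2*n+1) * (2*n).factorial) := by
    rw [show 2*(n+1) = (2*n+1)+1 by ring, Nat.factorial_succ, Nat.factorial_succ]
  have e3 : (m+1).factorial = (m+1) * m.factorial := Nat.factorial_succ m
  have e4 : (n+1).factorial = (n+1) * n.factorial := Nat.factorial_succ n
  have e5 : (m+1+n).factorial = (m+n+1) * (m+n).factorial := by
    rw [show m+1+n = (m+n)+1 by ring, Nat.factorial_succ]
  have e6 : (m+(n+1)).factorial = (m+n+1) * (m+n).factorial := by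
    rw [show m+(n+1) = (m+n)+1 by ring, Nat.factorial_succ]
  rw [e1, e2, e3, e4, e5, e6]
  have hm : (m.factorial : ℚ) ≠ 0 := Nat.cast_ne_zero.2 m.factorial_ne_zero
  have hn : (n.factorial : ℚ) ≠ 0 := Nat.cast_ne_zero.2 n.factorial_ne_zero
  have hmn : ((m+n).factorial : ℚ) ≠ 0 := Nat.cast_ne_zero.2 (m+n).factorial_ne_zero
  have hm1 : ((m:ℚ)+1) ≠ 0 := by positivity
  have hn1 : ((n:ℚ)+1) ≠ 0 := by positivity
  have hmn1 : ((m:ℚ)+(n:ℚ)+1) ≠ 0 := by positivity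
  push_cast
  field_simp
  ring

lemma Srat_base (n : ℕ) : Srat 0 n = ((2*n).choose n : ℚ) := by
  unfold Srat
  have key : (2*n).choose n * (n.factorial * n.factorial) = (2*n).factorial := by
    have := Nat.choose_mul_factorial_mul_factorial (show n ≤ 2*n by omega)
    rw [show 2*n - n = n by omega] at this
    rw [← this]; ring
  have hn : (n.factorial : ℚ) ≠ 0 := Nat.cast_ne_zero.2 n.factorial_ne_zero
  rw [show (2*0 : ℕ) = 0 by norm_num, show (0+n : ℕ) = n by omega]
  simp only [Nat.factorial_zero]
  rw [← key]
  push_cast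
  field_simp

lemma Srat_eq_T : ∀ m n L : ℕ, m ≤ L → Srat m n = T m n L := by
  intro m
  induction m with
  | zero => intro n L _; rw [T_base, Srat_base]
  | succ m ih =>
    intro n L hL
    have h4 := Srat_rec m n
    have hT := T_rec m n L (by omega)
    have i1 := ih n L (by omega)
    have i2 := ih (n+1) L (by omega)
    linarith

lemma sum_Ioc_consec (f : ℤ → ℚ) {a b c : ℤ} (hab : a ≤ b) (hbc : b ≤ c) :
    ∑ k ∈ Ioc a b, f k + ∑ k ∈ Ioc b c, f k = ∑ k ∈ Ioc a c, f k := by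
  rw [← Finset.sum_union (Finset.disjoint_left.2 (by
      intro x hx hx'
      simp only [Finset.mem_Ioc] at hx hx'
      omega)),
    Finset.Ioc_union_Ioc_eq_Ioc hab hbc]

theorem superCatalan_symmetrized (m n : ℕ) :
    ((Nat.factorial (2 * m) * Nat.factorial (2 * n) : ℚ)) /
      (Nat.factorial m * Nat.factorial n * Nat.factorial (m + n)) =
    (Nat.choose (2 * m) m * Nat.choose (2 * n) n : ℚ) +
      2 * ∑ᶠ (k : ℕ) (_ : 1 ≤ k),
        ((-1 : ℚ) ^ k) * (Nat.choose (2 * m) (m + k) : ℚ) * (Nat.choose (2 * n) (n + k) : ℚ) := by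
  classical
  set F : ℕ → ℚ := fun k =>
    ((-1 : ℚ) ^ k) * ((2 * m).choose (m + k) : ℚ) * ((2 * n).choose (n + k) : ℚ) with hF
  -- the finsum is a finite sum over Icc 1 m
  have hfin : ({k : ℕ | 1 ≤ k} ∩ Function.support F).Finite := by
    apply Set.Finite.subset (Set.finite_Icc 1 m)
    rintro k ⟨hk1, hk2⟩
    simp only [Set.mem_setOf_eq] at hk1
    simp only [Function.mem_support, hF] at hk2
    simp only [Set.mem_Icc]
    refine ⟨hk1, ?_⟩
    by_contra hc
    have : 2 * m < m + k := by omega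
    exact hk2 (by rw [Nat.choose_eq_zero_of_lt this]; push_cast; ring)
  have hsum : (∑ᶠ (k : ℕ) (_ : 1 ≤ k), F k) = ∑ k ∈ Icc 1 m, F k := by
    have h0 : (∑ᶠ (k : ℕ) (_ : 1 ≤ k), F k) = ∑ᶠ k ∈ {k : ℕ | 1 ≤ k}, F k := rfl
    rw [h0, finsum_mem_eq_sum F hfin]
    apply Finset.sum_subset
    · intro x hx
      have hx' := hfin.mem_toFinset.1 hx
      obtain ⟨h1, h2⟩ := hx'
      simp only [Set.mem_setOf_eq] at h1
      simp only [Function.mem_support, hF] at h2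
      simp only [Finset.mem_Icc]
      refine ⟨h1, ?_⟩
      by_contra hc
      have : 2 * m < m + x := by omega
      exact h2 (by rw [Nat.choose_eq_zero_of_lt this]; push_cast; ring)
    · intro x hx hx'
      simp only [Finset.mem_Icc] at hx
      by_contra hc
      exact hx' (hfin.mem_toFinset.2 ⟨hx.1, hc⟩)
  -- g at a natural number index equals F
  have gF : ∀ j : ℕ, g m n (j : ℤ) = F j := by
    intro j
    rw [g, hF]
    have e1 : (m:ℤ) + (j:ℤ) = ((m + j : ℕ) : ℤ) := by push_cast; ring
    have e2 : (n:ℤ) + (j:ℤ) = ((n + j : ℕ) : ℤ) := by push_cast; ring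
    rw [e1, e2, ch_natCast, ch_natCast, zpow_natCast]
  -- split T m n m into central term plus two tails
  have hT : T m n m = F 0 + 2 * ∑ k ∈ Icc 1 m, F k := by
    rw [T]
    have split1 : ∑ k ∈ Icc (-(m:ℤ)) m, g m n k
        = (∑ k ∈ Icc (-(m:ℤ)) (-1), g m n k) + ∑ k ∈ Icc (0:ℤ) m, g m n k := by
      rw [show Icc (-(m:ℤ)) (m:ℤ) = Ioc (-(m:ℤ)-1) (m:ℤ) by
            ext x; simp only [mem_Icc, mem_Ioc]; omega,
        show Icc (-(m:ℤ)) (-1:ℤ) = Ioc (-(m:ℤ)-1) (-1:ℤ) by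
            ext x; simp only [mem_Icc, mem_Ioc]; omega,
        show Icc (0:ℤ) (m:ℤ) = Ioc (-1:ℤ) (m:ℤ) by
            ext x; simp only [mem_Icc, mem_Ioc]; omega]
      exact (sum_Ioc_consec (g m n)
        (show -(m:ℤ)-1 ≤ -1 by omega) (show (-1:ℤ) ≤ (m:ℤ) by omega)).symm
    have split2 : ∑ k ∈ Icc (0:ℤ) m, g m n k
        = g m n 0 + ∑ k ∈ Icc (1:ℤ) m, g m n k := by
      rw [show Icc (0:ℤ) (m:ℤ) = Ioc (-1:ℤ) (m:ℤ) by
            ext x; simp only [mem_Icc, mem_Ioc]; omega,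
        show Icc (1:ℤ) (m:ℤ) = Ioc (0:ℤ) (m:ℤ) by
            ext x; simp only [mem_Icc, mem_Ioc]; omega,
        ← sum_Ioc_consec (g m n)
          (show (-1:ℤ) ≤ 0 by omega) (show (0:ℤ) ≤ (m:ℤ) by omega)]
      congr 1
      rw [show Ioc (-1:ℤ) (0:ℤ) = {0} by ext x; simp only [mem_Ioc, mem_singleton]; omega]
      simp
    have hneg : ∑ k ∈ Icc (-(m:ℤ)) (-1), g m n k = ∑ k ∈ Icc (1:ℤ) m, g m n k := by
      refine Finset.sum_nbij' (fun k => -k) (fun k => -k) ?_ ?_ ?_ ?_ ?_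
      · intro a ha; simp only [mem_Icc] at ha ⊢; omega
      · intro a ha; simp only [mem_Icc] at ha ⊢; omega
      · intro a _; ring
      · intro a _; ring
      · intro a _; exact (g_neg m n a).symm
    have hnat : ∑ k ∈ Icc (1:ℤ) m, g m n k = ∑ k ∈ Icc 1 m, F k := by
      refine Finset.sum_nbij' (fun k : ℤ => k.toNat) (fun k : ℕ => (k:ℤ)) ?_ ?_ ?_ ?_ ?_
      · intro a ha; simp only [mem_Icc] at ha ⊢; omega
      · intro a ha; simp only [mem_Icc] at ha ⊢; omega
      · intro a ha; simp only [mem_Icc] at ha; show ((a.toNat : ℕ) : ℤ) = a; omega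
      · intro a _; simp
      · intro a ha
        simp only [mem_Icc] at ha
        rw [← gF a.toNat, show ((a.toNat : ℕ) : ℤ) = a by omega]
    rw [split1, split2, hneg, hnat, ← gF 0]
    push_cast
    ring
  have main : Srat m n = F 0 + 2 * ∑ k ∈ Icc 1 m, F k := by
    rw [Srat_eq_T m n m le_rfl, hT]
  rw [hsum]
  have hF0 : F 0 = ((2*m).choose m : ℚ) * ((2*n).choose n : ℚ) := by
    rw [hF]; norm_num
  calc ((Nat.factorial (2 * m) * Nat.factorial (2 * n) : ℚ)) /
      (Nat.factorial m * Nat.factorial n * Nat.factorial (m + n))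
      = Srat m n := by rw [Srat]
    _ = F 0 + 2 * ∑ k ∈ Icc 1 m, F k := main
    _ = (Nat.choose (2 * m) m * Nat.choose (2 * n) n : ℚ) + 2 * ∑ k ∈ Icc 1 m, F k := by
        rw [hF0]
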